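/- Let J ⊂ Λ_{(k)} be the ideal generated by the elements s_{R_a} − r_a (a = 1,…,k) for fixed reals r_1,…,r_k, and let Λ̄_{(k)} = Λ_{(k)}/J. Then Λ̄_{(k)} has dimension k! over ℝ, and the images of the k-Schur functions s̄_κ for κ ranging over the k-irreducible partitions form an ℝ-basis of Λ̄_{(k)}. -/

import Mathlib

open MvPolynomial

/-- `Λ_(k) = ℝ[h_1,…,h_k]`, modelled as `MvPolynomial (Fin k) ℝ` with `X i = h_{i+1}`. -/
noncomputable abbrev Lambdak (k : ℕ) := MvPolynomial (Fin k) ℝ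

/-- `h_n` for `n ∈ ℤ`: `h_0 = 1`, `h_n = X (n-1)` for `1 ≤ n ≤ k`, `0` otherwise. -/
noncomputable def hsym (k : ℕ) (n : ℤ) : Lambdak k :=
  if hn : 0 < n ∧ n ≤ (k : ℤ) then X ⟨(n - 1).toNat, by omega⟩
  else if n = 0 then 1 else 0

/-- The rectangle Schur function `s_{R_{a+1}}`, `R_b = ((k-b+1)^b)`, via Jacobi-Trudi. -/
noncomputable def sR (k : ℕ) (a : Fin k) : Lambdak k :=
  (Matrix.of fun i j : Fin (a.val + 1) =>
    hsym k ((((k : ℤ) - a.val) - i.val) + j.val)).det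

/-- A `k`-irreducible partition, encoded by its part multiplicities:
`m j` is the number of parts equal to `j+1`, with at most `k - s` parts equal
to `s` for each `s = 1,…,k`.  There are exactly `k!` such partitions. -/
def Irr (k : ℕ) : Type := { m : Fin k → ℕ // ∀ j : Fin k, m j + j.val + 1 ≤ k }

def irrEquiv (k : ℕ) : Irr k ≃ (∀ j : Fin k, Fin (k - j.val)) where
  toFun m j := ⟨m.1 j, by have := m.2 j; omega⟩
  invFun f := ⟨fun j => (f j).1, fun j => by
    have := (f j).2; show (f j).1 + j.val + 1 ≤ k; omega⟩
  left_inv m := rfl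
  right_inv f := rfl

noncomputable instance (k : ℕ) : Fintype (Irr k) := Fintype.ofEquiv _ (irrEquiv k).symm

lemma card_irr (k : ℕ) : Fintype.card (Irr k) = k.factorial := by
  rw [Fintype.card_congr (irrEquiv k), Fintype.card_pi]
  simp only [Fintype.card_fin]
  rw [Fin.prod_univ_eq_prod_range (fun i => k - i) k]
  have h : ∏ i ∈ Finset.range k, (k - i) = ∏ i ∈ Finset.range k, (i + 1) := by
    rw [← Finset.prod_range_reflect]
    exact Finset.prod_congr rfl fun i hi => by
      have := Finset.mem_range.mp hi; omega
  rw [h, Finset.prod_range_add_one_eq_factorial]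

set_option maxHeartbeats 1000000 in
/-- assuming the factorization property of `k`-Schur functions
(the products of rectangle Schur monomials with irreducible `k`-Schur
functions form an `ℝ`-basis of `Λ_(k)`), the quotient
`Λ̄_(k) = Λ_(k)/⟨s_{R_a} - r_a⟩` has `ℝ`-dimension `k!`, and the images of the
irreducible `k`-Schur functions form an `ℝ`-basis of it. -/
theorem quotient_dimension_and_basis (k : ℕ) (hk : 0 < k)
    (sIrr : Irr k → Lambdak k)
    (B : Module.Basis ((Fin k → ℕ) × Irr k) ℝ (Lambdak k))
    (hB : ∀ (p : Fin k → ℕ) (κ : Irr k),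
      B (p, κ) = (∏ a : Fin k, sR k a ^ p a) * sIrr κ)
    (r : Fin k → ℝ) (J : Ideal (Lambdak k))
    (hJ : J = Ideal.span (Set.range fun a : Fin k => sR k a - C (r a))) :
    Module.finrank ℝ (Lambdak k ⧸ J) = k.factorial
    ∧ ∃ b : Module.Basis (Irr k) ℝ (Lambdak k ⧸ J),
        ∀ κ : Irr k, b κ = Ideal.Quotient.mk J (sIrr κ) := by
  classical
  set weight : (Fin k → ℕ) × Irr k → ℝ := fun i => ∏ a, r a ^ i.1 a with hweight
  -- the quotient map as an ℝ-linear map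
  set Lmk : Lambdak k →ₗ[ℝ] Lambdak k ⧸ J := (Ideal.Quotient.mkₐ ℝ J).toLinearMap with hLmk
  have hLmk_apply : ∀ x, Lmk x = Ideal.Quotient.mk J x := fun x => rfl
  have hmk_smul : ∀ (c : ℝ) (x : Lambdak k),
      Ideal.Quotient.mk J (c • x) = c • Ideal.Quotient.mk J x := fun c x =>
    map_smul (Ideal.Quotient.mkₐ ℝ J) c x
  -- sR a ≡ C (r a) mod J
  have hmkR : ∀ a : Fin k, Ideal.Quotient.mk J (sR k a) = Ideal.Quotient.mk J (C (r a)) := by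
    intro a
    have hmem : sR k a - C (r a) ∈ J := hJ ▸ Ideal.subset_span ⟨a, rfl⟩
    have h0 : Ideal.Quotient.mk J (sR k a - C (r a)) = 0 :=
      Ideal.Quotient.eq_zero_iff_mem.2 hmem
    rw [map_sub, sub_eq_zero] at h0
    exact h0
  -- image of basis vectors in the quotient
  have hmkB : ∀ (p : Fin k → ℕ) (κ : Irr k),
      Ideal.Quotient.mk J (B (p, κ)) =
        weight (p, κ) • Ideal.Quotient.mk J (sIrr κ) := by
    intro p κ
    rw [hB p κ, map_mul]
    have h1 : Ideal.Quotient.mk J (∏ a, sR k a ^ p a) =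
        Ideal.Quotient.mk J (C (weight (p, κ))) := by
      have hterm : ∀ a ∈ Finset.univ, Ideal.Quotient.mk J (sR k a ^ p a) =
          Ideal.Quotient.mk J (C (r a ^ p a)) := fun a _ => by
        rw [map_pow, hmkR, ← map_pow, ← map_pow]
      calc Ideal.Quotient.mk J (∏ a, sR k a ^ p a)
          = ∏ a, Ideal.Quotient.mk J (sR k a ^ p a) := map_prod _ _ _
        _ = ∏ a, Ideal.Quotient.mk J (C (r a ^ p a)) := Finset.prod_congr rfl hterm
        _ = Ideal.Quotient.mk J (∏ a, C (r a ^ p a)) := (map_prod _ _ _).symm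
        _ = Ideal.Quotient.mk J (C (weight (p, κ))) := by
            rw [← map_prod (C : ℝ →+* Lambdak k) (fun a => r a ^ p a) Finset.univ]
    rw [h1, ← map_mul, ← smul_eq_C_mul, hmk_smul]
  have hB0 : ∀ κ : Irr k, B ((0 : Fin k → ℕ), κ) = sIrr κ := by
    intro κ; rw [hB]; simp
  have hw0 : ∀ κ : Irr k, weight ((0 : Fin k → ℕ), κ) = 1 := by
    intro κ; simp [hweight]
  -- the ℝ-submodule W, equal to J as a set
  set v : (Fin k → ℕ) × Irr k → Lambdak k :=
    fun i => B i - weight i • B (0, i.2) with hv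
  set W : Submodule ℝ (Lambdak k) := Submodule.span ℝ (Set.range v) with hW
  -- key: f * (sR a - C (r a)) ∈ W for all f
  have hkey : ∀ (f : Lambdak k) (a : Fin k), f * (sR k a - C (r a)) ∈ W := by
    intro f a
    have hBW : ∀ i : (Fin k → ℕ) × Irr k, B i * (sR k a - C (r a)) ∈ W := by
      rintro ⟨p, κ⟩
      set q : Fin k → ℕ := fun b => p b + (if b = a then 1 else 0) with hqdef
      have hpow : (∏ b, sR k b ^ (if b = a then 1 else 0)) = sR k a := by
        rw [Finset.prod_eq_single a]
        · simp
        · intro b _ hb; simp [hb]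
        · intro h; exact absurd (Finset.mem_univ a) h
      have hq : B (p, κ) * sR k a = B (q, κ) := by
        rw [hB, hB]
        have : (∏ b, sR k b ^ q b) = (∏ b, sR k b ^ p b) * sR k a := by
          simp only [hqdef, pow_add]
          rw [Finset.prod_mul_distrib, hpow]
        rw [this]; ring
      have hrpow : (∏ b, r b ^ (if b = a then 1 else 0)) = r a := by
        rw [Finset.prod_eq_single a]
        · simp
        · intro b _ hb; simp [hb]
        · intro h; exact absurd (Finset.mem_univ a) h
      have hwq : weight (q, κ) = r a * weight (p, κ) := by
        simp only [hweight, hqdef, pow_add]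
        rw [Finset.prod_mul_distrib, hrpow]; ring
      have hexp : B (p, κ) * (sR k a - C (r a)) = v (q, κ) - r a • v (p, κ) := by
        have h2 : v (q, κ) - r a • v (p, κ) = B (q, κ) - r a • B (p, κ) := by
          simp only [hv]
          rw [hwq, smul_sub, smul_smul]
          abel
        rw [h2, mul_sub, hq, mul_comm _ (C (r a)), ← smul_eq_C_mul]
      rw [hexp]
      exact sub_mem (Submodule.subset_span ⟨_, rfl⟩)
        (Submodule.smul_mem _ _ (Submodule.subset_span ⟨_, rfl⟩))
    have hf : f = (B.repr f).sum fun i c => c • B i := (B.linearCombination_repr f).symm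
    have heq : f * (sR k a - C (r a))
        = (B.repr f).sum fun i c => c • (B i * (sR k a - C (r a))) := by
      conv_lhs => rw [hf]
      rw [Finsupp.sum_mul]
      exact Finsupp.sum_congr fun i _ => smul_mul_assoc _ _ _
    rw [heq]
    exact Submodule.sum_mem _ fun i _ => Submodule.smul_mem _ _ (hBW i)
  have hJW : ∀ x ∈ J, x ∈ W := by
    intro x hx
    rw [hJ, Ideal.mem_span_range_iff_exists_fun] at hx
    obtain ⟨c, hc⟩ := hx
    rw [← hc]
    exact Submodule.sum_mem _ fun a _ => hkey (c a) a
  -- the detection map L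
  set L : Lambdak k →ₗ[ℝ] (Irr k →₀ ℝ) :=
    (Finsupp.lsum ℝ fun i : (Fin k → ℕ) × Irr k =>
      weight i • Finsupp.lsingle i.2).comp B.repr.toLinearMap with hL
  have hLB : ∀ i : (Fin k → ℕ) × Irr k, L (B i) = weight i • Finsupp.single i.2 1 := by
    intro i
    simp [hL, Module.Basis.repr_self, Finsupp.lsum_single]
  have hLW : ∀ x ∈ W, L x = 0 := by
    have hle : W ≤ LinearMap.ker L := by
      rw [hW]
      rw [Submodule.span_le]
      rintro x ⟨i, rfl⟩
      simp only [SetLike.mem_coe, LinearMap.mem_ker, hv]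
      rw [map_sub, map_smul, hLB, hLB, hw0, one_smul]
      simp
    exact fun x hx => hle hx
  -- linear independence
  have hli : LinearIndependent ℝ (fun κ : Irr k => Ideal.Quotient.mk J (sIrr κ)) := by
    rw [Fintype.linearIndependent_iff]
    intro c hc κ0
    have hxJ : (∑ κ : Irr k, c κ • B ((0 : Fin k → ℕ), κ)) ∈ J := by
      rw [← Ideal.Quotient.eq_zero_iff_mem, map_sum]
      simp_rw [hmk_smul, hB0]
      exact hc
    have h0 := hLW _ (hJW _ hxJ)
    rw [map_sum] at h0
    simp_rw [map_smul, hLB, hw0, one_smul] at h0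
    have h1 := DFunLike.congr_fun h0 κ0
    simpa [Finsupp.single_apply] using h1
  -- spanning
  have hsp : ⊤ ≤ Submodule.span ℝ (Set.range fun κ : Irr k => Ideal.Quotient.mk J (sIrr κ)) := by
    have h1 : Submodule.span ℝ (Set.range fun i => Lmk (B i)) = ⊤ := by
      have : (Set.range fun i => Lmk (B i)) = Lmk '' Set.range B := by
        rw [← Set.range_comp]; rfl
      rw [this, ← Submodule.map_span, Module.Basis.span_eq, Submodule.map_top,
        LinearMap.range_eq_top]
      exact Ideal.Quotient.mkₐ_surjective ℝ J
    have h2 : Submodule.span ℝ (Set.range fun i => Lmk (B i)) ≤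
        Submodule.span ℝ (Set.range fun κ : Irr k => Ideal.Quotient.mk J (sIrr κ)) := by
      rw [Submodule.span_le]
      rintro x ⟨i, rfl⟩
      show Lmk (B i) ∈ _
      rw [hLmk_apply]
      obtain ⟨p, κ⟩ := i
      rw [hmkB]
      exact Submodule.smul_mem _ _ (Submodule.subset_span ⟨κ, rfl⟩)
    rw [← h1]
    exact h2
  let b : Module.Basis (Irr k) ℝ (Lambdak k ⧸ J) := Module.Basis.mk hli hsp
  have hb : ∀ κ : Irr k, b κ = Ideal.Quotient.mk J (sIrr κ) := fun κ => Module.Basis.mk_apply hli hsp κ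
  refine ⟨?_, ⟨b, hb⟩⟩
  rw [Module.finrank_eq_card_basis b, card_irr]
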